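/- In the power series ring k[[x,y]] over a field k, for n ≥ 2 one has (x^{n-1}y)^{n-1} ∉ (x^n, y^n)(x^n, y^n, x^{n-1}y)^{n-2}. -/

import Mathlib

open MvPowerSeries

open Finsupp in
private lemma key_vanish (k : Type) [Field k] (n : ℕ) (hn : 2 ≤ n) (m : ℕ) :
    ∀ f ∈ (Ideal.span {(X 0 : MvPowerSeries (Fin 2) k) ^ n, X 1 ^ n,
        X 0 ^ (n - 1) * X 1}) ^ m,
    ∀ e : Fin 2 →₀ ℕ, e 1 < n → e 0 < m * (n - 1) →
      (coeff (R := k) e) f = 0 := by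
  induction m with
  | zero =>
    intro f _ e _ h0
    omega
  | succ m ih =>
    intro f hf
    rw [pow_succ] at hf
    refine Submodule.mul_induction_on hf ?_ ?_
    · intro p hp q hq e he1 he0
      rw [show ({(X 0 : MvPowerSeries (Fin 2) k) ^ n, X 1 ^ n, X 0 ^ (n - 1) * X 1} :
            Set (MvPowerSeries (Fin 2) k)) =
          insert ((X 0 : MvPowerSeries (Fin 2) k) ^ n)
            (insert ((X 1 : MvPowerSeries (Fin 2) k) ^ n)
              {(X 0 : MvPowerSeries (Fin 2) k) ^ (n - 1) * X 1}) from rfl,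
        Ideal.span, Submodule.mem_span_insert] at hq
      obtain ⟨u, z, hz, rfl⟩ := hq
      rw [Submodule.mem_span_insert] at hz
      obtain ⟨v, w, hw, rfl⟩ := hz
      rw [← Ideal.span, Ideal.mem_span_singleton'] at hw
      obtain ⟨r, rfl⟩ := hw
      have hX0 : (X 0 : MvPowerSeries (Fin 2) k) ^ n = monomial (R := k) (single 0 n) 1 :=
        X_pow_eq 0 n
      have hX1 : (X 1 : MvPowerSeries (Fin 2) k) ^ n = monomial (R := k) (single 1 n) 1 :=
        X_pow_eq 1 n
      have hX01 : (X 0 : MvPowerSeries (Fin 2) k) ^ (n - 1) * X 1 =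
          monomial (R := k) (single 0 (n - 1) + single 1 1) 1 := by
        rw [← pow_one (X 1 : MvPowerSeries (Fin 2) k), X_pow_eq, X_pow_eq,
          monomial_mul_monomial, one_mul]
      have hexp : p * (u • (X 0 : MvPowerSeries (Fin 2) k) ^ n +
            (v • (X 1 : MvPowerSeries (Fin 2) k) ^ n +
              r * ((X 0 : MvPowerSeries (Fin 2) k) ^ (n - 1) * X 1))) =
          (p * u) * ((X 0 : MvPowerSeries (Fin 2) k) ^ n) +
          ((p * v) * ((X 1 : MvPowerSeries (Fin 2) k) ^ n) +
            (p * r) * ((X 0 : MvPowerSeries (Fin 2) k) ^ (n - 1) * X 1)) := by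
        simp only [smul_eq_mul]; ring
      rw [hexp, map_add, map_add, hX0, hX1, hX01,
        coeff_mul_monomial, coeff_mul_monomial, coeff_mul_monomial]
      have hrel : (m + 1) * (n - 1) = m * (n - 1) + (n - 1) := by ring
      generalize hA : m * (n - 1) = A at *
      generalize hB : (m + 1) * (n - 1) = B at *
      have e1ne : (single (0 : Fin 2) n) 1 = 0 := by
        rw [single_apply]; simp
      have e1ne' : (single (0 : Fin 2) (n - 1)) 1 = 0 := by
        rw [single_apply]; simp
      have ty : (if single (1 : Fin 2) n ≤ e then
          (coeff (R := k) (e - single 1 n)) (p * v) * 1 else 0) = 0 := by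
        rw [if_neg]
        intro hle
        have := single_le_iff.mp hle
        omega
      have t1 : (if single (0 : Fin 2) n ≤ e then
          (coeff (R := k) (e - single 0 n)) (p * u) * 1 else 0) = 0 := by
        split_ifs with h
        · have h0 : n ≤ e 0 := single_le_iff.mp h
          rw [ih (p * u) (Ideal.mul_mem_right u _ hp)]
          · ring
          · rw [tsub_apply, e1ne]; omega
          · rw [tsub_apply, single_eq_same]; omega
        · rfl
      have t2 : (if single (0 : Fin 2) (n - 1) + single 1 1 ≤ e then
          (coeff (R := k) (e - (single 0 (n - 1) + single 1 1))) (p * r) * 1 else 0) = 0 := by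
        split_ifs with h
        · have h0 : n - 1 ≤ e 0 := by
            have := Finsupp.le_def.mp h 0
            rw [Finsupp.add_apply, single_eq_same, single_apply] at this
            simpa using this
          rw [ih (p * r) (Ideal.mul_mem_right r _ hp)]
          · ring
          · rw [tsub_apply, Finsupp.add_apply, e1ne']; omega
          · rw [tsub_apply, Finsupp.add_apply, single_eq_same, single_apply]
            simp only [show ((1 : Fin 2) = 0) = False from by simp, if_false]
            omega
        · rfl
      rw [t1, ty, t2, add_zero, add_zero]
    · intro x y hx hy e he1 he0
      rw [map_add, hx e he1 he0, hy e he1 he0, add_zero]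

/-- In the power series ring `k[[x,y]]`, for `n ≥ 2` one has
`(x^{n-1}y)^{n-1} ∉ (x^n, y^n)·(x^n, y^n, x^{n-1}y)^{n-2}`. -/
theorem pow_not_mem_span_mul_pow (k : Type) [Field k] (n : ℕ) (hn : 2 ≤ n) :
    ((X 0 : MvPowerSeries (Fin 2) k) ^ (n - 1) * X 1) ^ (n - 1) ∉
      Ideal.span {(X 0 : MvPowerSeries (Fin 2) k) ^ n, X 1 ^ n} *
        (Ideal.span {(X 0 : MvPowerSeries (Fin 2) k) ^ n, X 1 ^ n,
          X 0 ^ (n - 1) * X 1}) ^ (n - 2) := by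
  classical
  intro hmem
  set E : Fin 2 →₀ ℕ :=
    Finsupp.single 0 ((n - 1) * (n - 1)) + Finsupp.single 1 (n - 1) with hE
  have hE0 : E 0 = (n - 1) * (n - 1) := by
    rw [hE, Finsupp.add_apply, Finsupp.single_eq_same, Finsupp.single_apply]
    simp
  have hE1 : E 1 = n - 1 := by
    rw [hE, Finsupp.add_apply, Finsupp.single_eq_same, Finsupp.single_apply]
    simp
  have htarget : (coeff (R := k) E)
      (((X 0 : MvPowerSeries (Fin 2) k) ^ (n - 1) * X 1) ^ (n - 1)) = 1 := by
    rw [mul_pow, ← pow_mul, ← pow_one (X 1 : MvPowerSeries (Fin 2) k), ← pow_mul,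
      X_pow_eq, X_pow_eq, monomial_mul_monomial, one_mul, one_mul, coeff_monomial_same]
  have hzero : (coeff (R := k) E)
      (((X 0 : MvPowerSeries (Fin 2) k) ^ (n - 1) * X 1) ^ (n - 1)) = 0 := by
    refine Submodule.mul_induction_on hmem ?_ ?_
    · intro g hg h hh
      obtain ⟨u, v, rfl⟩ := Ideal.mem_span_pair.mp hg
      have hexp : (u * (X 0 : MvPowerSeries (Fin 2) k) ^ n + v * X 1 ^ n) * h =
          (u * h) * ((X 0 : MvPowerSeries (Fin 2) k) ^ n) +
          (v * h) * ((X 1 : MvPowerSeries (Fin 2) k) ^ n) := by ring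
      rw [hexp, map_add, X_pow_eq, X_pow_eq, coeff_mul_monomial, coeff_mul_monomial]
      have ty : (if Finsupp.single (1 : Fin 2) n ≤ E then
          (coeff (R := k) (E - Finsupp.single 1 n)) (v * h) * 1 else 0) = 0 := by
        rw [if_neg]
        intro hle
        have := Finsupp.single_le_iff.mp hle
        rw [hE1] at this
        omega
      have tx : (if Finsupp.single (0 : Fin 2) n ≤ E then
          (coeff (R := k) (E - Finsupp.single 0 n)) (u * h) * 1 else 0) = 0 := by
        split_ifs with hc
        · have h0 : n ≤ E 0 := Finsupp.single_le_iff.mp hc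
          rw [key_vanish k n hn (n - 2) (u * h) (Ideal.mul_mem_left _ u hh)]
          · ring
          · rw [Finsupp.tsub_apply, hE1, Finsupp.single_apply]
            simp only [show ((0 : Fin 2) = 1) = False from by simp, if_false]
            omega
          · rw [Finsupp.tsub_apply, Finsupp.single_eq_same, hE0]
            rw [hE0] at h0
            have hrel : (n - 1) * (n - 1) = (n - 2) * (n - 1) + (n - 1) := by
              have h1 : n - 1 = (n - 2) + 1 := by omega
              rw [h1]; ring
            generalize hA : (n - 1) * (n - 1) = A at *
            generalize hB : (n - 2) * (n - 1) = B at *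
            omega
        · rfl
      rw [tx, ty, add_zero]
    · intro x y hx hy
      rw [map_add, hx, hy, add_zero]
  rw [htarget] at hzero
  exact one_ne_zero hzero
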